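/- Let p(·) be a sampling design on a finite population U of size N represented by a splitting (martingale) scheme in T steps, so that the Horvitz–Thompson estimator satisfies t̂ - t = Σ_{t=1}^T ξ(t) where ξ(t) = Σ_{k∈U(t)} (y_k/π_k)·δ_k(t) are martingale increments. If for each t there is a constant a_t such that almost surely Σ_{k∈U(t)} |δ_k(t)| ≤ a_t, then for every ε > 0, Pr(t̂ - t ≥ Nε) ≤ exp(−N²ε² / (2·(sup_k |y_k/π_k|)² · Σ_{t=1}^T a_t²)). -/

import Mathlib

open MeasureTheory Finset
open Real ProbabilityTheory

lemma exp_le_cosh_add (l c x : ℝ) (hc : 0 < c) (hx : |x| ≤ c) :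
    exp (l * x) ≤ cosh (l * c) + (sinh (l * c) / c) * x := by
  have h1 : -c ≤ x := neg_le_of_abs_le hx
  have h2 : x ≤ c := le_of_abs_le hx
  set θ : ℝ := (x + c) / (2 * c) with hθdef
  have hθ0 : 0 ≤ θ := div_nonneg (by linarith) (by linarith)
  have hθ1 : 0 ≤ 1 - θ := by
    rw [sub_nonneg, hθdef, div_le_one (by linarith)]; linarith
  have hsum : θ + (1 - θ) = 1 := by ring
  have hcx : θ * (l * c) + (1 - θ) * (-(l * c)) = l * x := by
    rw [hθdef]; field_simp; ring
  have hconv := convexOn_exp.2 (Set.mem_univ (l * c)) (Set.mem_univ (-(l * c))) hθ0 hθ1 hsum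
  simp only [smul_eq_mul] at hconv
  rw [hcx] at hconv
  refine hconv.trans (le_of_eq ?_)
  rw [Real.cosh_eq, Real.sinh_eq, hθdef]
  field_simp
  ring

/-- Conditional Hoeffding bound for a bounded, conditionally centered variable. -/
lemma condexp_exp_le {Ω : Type*} {m0 : MeasurableSpace Ω}
    (μ : Measure Ω) [IsProbabilityMeasure μ] {m : MeasurableSpace Ω} (hm : m ≤ m0) {X : Ω → ℝ} (hX : Integrable X μ)
    (hXc : μ[X | m] =ᵐ[μ] 0) {c : ℝ} (hc : ∀ᵐ ω ∂μ, |X ω| ≤ c) (l : ℝ) :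
    μ[fun ω => exp (l * X ω) | m] ≤ᵐ[μ] fun _ => exp (l ^ 2 * c ^ 2 / 2) := by
  have hc0 : 0 ≤ c := by
    rcases hc.exists with ⟨ω, hω⟩
    exact (abs_nonneg _).trans hω
  have hexp_meas : AEStronglyMeasurable[m0] (fun ω => exp (l * X ω)) μ :=
    (Real.continuous_exp.comp (continuous_const.mul continuous_id)).comp_aestronglyMeasurable
      hX.aestronglyMeasurable
  have hexp_bdd : ∀ᵐ ω ∂μ, ‖exp (l * X ω)‖ ≤ exp (|l| * c) := by
    filter_upwards [hc] with ω hω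
    rw [Real.norm_eq_abs, abs_of_pos (exp_pos _), exp_le_exp]
    calc l * X ω ≤ |l * X ω| := le_abs_self _
      _ = |l| * |X ω| := abs_mul _ _
      _ ≤ |l| * c := by gcongr
  have hexp_int : Integrable (fun ω => exp (l * X ω)) μ :=
    Integrable.mono' (integrable_const _) hexp_meas hexp_bdd
  rcases eq_or_lt_of_le hc0 with hc0' | hc0'
  · -- c = 0 : X = 0 a.e.
    have hX0 : (fun ω => exp (l * X ω)) =ᵐ[μ] fun _ => (1 : ℝ) := by
      filter_upwards [hc] with ω hω
      rw [← hc0'] at hω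
      have : X ω = 0 := abs_nonpos_iff.mp hω
      simp [this]
    calc μ[fun ω => exp (l * X ω) | m] =ᵐ[μ] μ[fun _ => (1:ℝ) | m] := condExp_congr_ae hX0
      _ =ᵐ[μ] fun _ => (1:ℝ) := Filter.EventuallyEq.of_eq (condExp_const (μ := μ) hm (1:ℝ))
      _ ≤ᵐ[μ] fun _ => exp (l ^ 2 * c ^ 2 / 2) := by
          filter_upwards with ω
          have h0 : (0:ℝ) ≤ l ^ 2 * c ^ 2 / 2 := by positivity
          exact Real.one_le_exp h0
  · -- c > 0
    have hptwise : ∀ᵐ ω ∂μ, exp (l * X ω) ≤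
        cosh (l * c) + (sinh (l * c) / c) * X ω := by
      filter_upwards [hc] with ω hω using exp_le_cosh_add l c (X ω) hc0' hω
    have hrhs_int : Integrable (fun ω => cosh (l * c) + (sinh (l * c) / c) * X ω) μ :=
      (integrable_const _).add (hX.const_mul _)
    have h1 : μ[fun ω => exp (l * X ω) | m] ≤ᵐ[μ]
        μ[fun ω => cosh (l * c) + (sinh (l * c) / c) * X ω | m] :=
      condExp_mono hexp_int hrhs_int hptwise
    have h2 : μ[fun ω => cosh (l * c) + (sinh (l * c) / c) * X ω | m] =ᵐ[μ]
        fun _ => cosh (l * c) := by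
      have hadd : μ[fun ω => cosh (l * c) + (sinh (l * c) / c) * X ω | m] =ᵐ[μ]
          μ[fun _ => cosh (l * c) | m] + μ[fun ω => (sinh (l * c) / c) * X ω | m] :=
        condExp_add (integrable_const _) (hX.const_mul _) m
      have hsmul : μ[fun ω => (sinh (l * c) / c) * X ω | m] =ᵐ[μ]
          fun ω => (sinh (l * c) / c) * (μ[X | m]) ω := by
        simpa [Pi.smul_def, smul_eq_mul] using condExp_smul (μ := μ) (m := m) (sinh (l * c) / c) X
      filter_upwards [hadd, hsmul, hXc] with ω h₁ h₂ h₃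
      simp only [Pi.add_apply] at h₁ ⊢
      rw [h₁, condExp_const (μ := μ) hm (cosh (l*c)), h₂, h₃]
      simp
    refine (h1.trans_eq h2).trans ?_
    filter_upwards with ω
    calc cosh (l * c) ≤ exp ((l * c) ^ 2 / 2) := Real.cosh_le_exp_half_sq _
      _ = exp (l ^ 2 * c ^ 2 / 2) := by ring_nf


/-- Theorem 1 of the paper: for a sampling design represented by a splitting
(martingale) scheme `I_U = π_U + Σ_{t=1}^T δ(t)` with `Σ_k |δ_k(t)| ≤ a_t` a.s.,
the Horvitz–Thompson estimator satisfies, for every `ε > 0`,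
`Pr(t̂ − t ≥ Nε) ≤ exp(−N²ε²/(2 (sup_k |y_k/π_k|)² Σ_t a_t²))`. -/
theorem ht_splitting_exponential_inequality {Ω : Type*} {m0 : MeasurableSpace Ω}
    (μ : Measure Ω) [IsProbabilityMeasure μ]
    (N : ℕ) (hN : 0 < N) (y p : Fin N → ℝ) (hp : ∀ k, 0 < p k)
    (S : Ω → Finset (Fin N))
    (T : ℕ) (ℱ : Filtration ℕ m0)
    (δ : ℕ → Ω → Fin N → ℝ) (a : ℕ → ℝ)
    -- the `δ(t)` are martingale increments adapted to the filtration
    (hadapted : ∀ t ∈ Icc 1 T, ∀ k, StronglyMeasurable[ℱ t] fun ω => δ t ω k)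
    (hint : ∀ t ∈ Icc 1 T, ∀ k, Integrable (fun ω => δ t ω k) μ)
    (hmds : ∀ t ∈ Icc 1 T, ∀ k, μ[fun ω => δ t ω k | ℱ (t - 1)] =ᵐ[μ] 0)
    -- martingale representation of the sample membership indicators
    (hrep : ∀ᵐ ω ∂μ, ∀ k, (if k ∈ S ω then (1 : ℝ) else 0) =
        p k + ∑ t ∈ Icc 1 T, δ t ω k)
    -- ℓ¹ control of the increments
    (hbdd : ∀ t ∈ Icc 1 T, ∀ᵐ ω ∂μ, ∑ k, |δ t ω k| ≤ a t) :
    ∀ ε : ℝ, 0 < ε →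
      μ {ω | (N : ℝ) * ε ≤ (∑ k ∈ S ω, y k / p k) - ∑ k, y k} ≤
        ENNReal.ofReal (Real.exp (-((N : ℝ) ^ 2 * ε ^ 2) /
          (2 * (⨆ k, |y k / p k|) ^ 2 * ∑ t ∈ Icc 1 T, a t ^ 2))) := by
  intro ε hε
  haveI : Nonempty (Fin N) := ⟨⟨0, hN⟩⟩
  set M : ℝ := ⨆ k, |y k / p k| with hMdef
  set ξ : ℕ → Ω → ℝ := fun t ω => ∑ k, (y k / p k) * δ t ω k with hξdef
  have hM : ∀ k, |y k / p k| ≤ M := by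
    intro k
    rw [hMdef]
    exact le_ciSup (Set.Finite.bddAbove (Set.finite_range fun k => |y k / p k|)) k
  have hM0 : 0 ≤ M := (abs_nonneg _).trans (hM ⟨0, hN⟩)
  have ha : ∀ t ∈ Icc 1 T, 0 ≤ a t := by
    intro t ht
    rcases (hbdd t ht).exists with ⟨ω, hω⟩
    exact le_trans (Finset.sum_nonneg fun k _ => abs_nonneg _) hω
  -- measurability and integrability of the increments ξ t
  have hξ_meas : ∀ t ∈ Icc 1 T, StronglyMeasurable[ℱ t] (ξ t) := by
    intro t ht
    exact Finset.stronglyMeasurable_fun_sum _ fun k _ => (hadapted t ht k).const_mul _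
  have hξ_int : ∀ t ∈ Icc 1 T, Integrable (ξ t) μ := by
    intro t ht
    exact integrable_finset_sum _ fun k _ => (hint t ht k).const_mul _
  -- conditional centering of ξ t
  have hξ_cond : ∀ t ∈ Icc 1 T, μ[ξ t | ℱ (t - 1)] =ᵐ[μ] 0 := by
    intro t ht
    have h1 : ξ t = ∑ k, fun ω => (y k / p k) * δ t ω k := by
      funext ω; simp [hξdef]
    have h2 : μ[ξ t | ℱ (t-1)] =ᵐ[μ]
        ∑ k : Fin N, μ[fun ω => (y k / p k) * δ t ω k | ℱ (t-1)] := by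
      rw [h1]
      exact condExp_finsetSum (fun k _ => (hint t ht k).const_mul _) _
    have h3 : ∀ k : Fin N, μ[fun ω => (y k / p k) * δ t ω k | ℱ (t-1)] =ᵐ[μ] 0 := by
      intro k
      have := condExp_smul (μ := μ) (m := ℱ (t-1)) (y k / p k) (fun ω => δ t ω k)
      refine (this.trans ?_)
      filter_upwards [hmds t ht k] with ω hω
      simp [hω]
    refine h2.trans ?_
    have : ∀ᵐ ω ∂μ, ∀ k : Fin N,
        (μ[fun ω => (y k / p k) * δ t ω k | ℱ (t-1)]) ω = 0 := by
      rw [ae_all_iff]; intro k; exact h3 k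
    filter_upwards [this] with ω hω
    simp only [Finset.sum_apply, Pi.zero_apply]
    exact Finset.sum_eq_zero fun k _ => hω k
  -- a.e. bound on the increments
  have hξ_bdd : ∀ t ∈ Icc 1 T, ∀ᵐ ω ∂μ, |ξ t ω| ≤ M * a t := by
    intro t ht
    filter_upwards [hbdd t ht] with ω hω
    calc |ξ t ω| ≤ ∑ k, |(y k / p k) * δ t ω k| := Finset.abs_sum_le_sum_abs _ _
      _ = ∑ k, |y k / p k| * |δ t ω k| := by simp [abs_mul]
      _ ≤ ∑ k, M * |δ t ω k| := by
          refine Finset.sum_le_sum fun k _ => ?_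
          exact mul_le_mul_of_nonneg_right (hM k) (abs_nonneg _)
      _ = M * ∑ k, |δ t ω k| := by rw [Finset.mul_sum]
      _ ≤ M * a t := mul_le_mul_of_nonneg_left hω hM0
  -- the partial sums
  set Z : ℕ → Ω → ℝ := fun n ω => ∑ t ∈ Icc 1 n, ξ t ω with hZdef
  have hZ_meas : ∀ n, n ≤ T → StronglyMeasurable[ℱ n] (Z n) := by
    intro n hn
    refine Finset.stronglyMeasurable_fun_sum _ fun t ht => ?_
    rw [Finset.mem_Icc] at ht
    exact (hξ_meas t (Finset.mem_Icc.2 ⟨ht.1, ht.2.trans hn⟩)).mono (ℱ.mono ht.2)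
  have hξ_bdd_all : ∀ᵐ ω ∂μ, ∀ t ∈ Icc 1 T, |ξ t ω| ≤ M * a t := by
    rw [ae_all_iff]
    intro t
    rw [Filter.eventually_imp_distrib_left]
    intro ht; exact hξ_bdd t ht
  -- a.e. bound on exp (l * Z n)
  have hZexp_bdd : ∀ l : ℝ, ∀ n, n ≤ T → ∀ᵐ ω ∂μ,
      ‖Real.exp (l * Z n ω)‖ ≤ Real.exp (|l| * ∑ t ∈ Icc 1 n, M * a t) := by
    intro l n hn
    filter_upwards [hξ_bdd_all] with ω hω
    rw [Real.norm_eq_abs, abs_of_pos (Real.exp_pos _), Real.exp_le_exp]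
    calc l * Z n ω ≤ |l * Z n ω| := le_abs_self _
      _ = |l| * |Z n ω| := abs_mul _ _
      _ ≤ |l| * ∑ t ∈ Icc 1 n, M * a t := by
          refine mul_le_mul_of_nonneg_left ?_ (abs_nonneg _)
          refine (Finset.abs_sum_le_sum_abs _ _).trans (Finset.sum_le_sum fun t ht => ?_)
          rw [Finset.mem_Icc] at ht
          exact hω t (Finset.mem_Icc.2 ⟨ht.1, ht.2.trans hn⟩)
  have hZexp_int : ∀ l : ℝ, ∀ n, n ≤ T →
      Integrable (fun ω => Real.exp (l * Z n ω)) μ := by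
    intro l n hn
    refine Integrable.mono' (integrable_const _) ?_ (hZexp_bdd l n hn)
    exact (Real.continuous_exp.comp (continuous_const.mul continuous_id)).comp_stronglyMeasurable
      ((hZ_meas n hn).mono (ℱ.le n)) |>.aestronglyMeasurable
  -- the Azuma induction
  have key : ∀ l : ℝ, ∀ n, n ≤ T →
      ∫ ω, Real.exp (l * Z n ω) ∂μ ≤
        Real.exp (l ^ 2 * M ^ 2 * (∑ t ∈ Icc 1 n, a t ^ 2) / 2) := by
    intro l n
    induction n with
    | zero =>
      intro _
      simp [hZdef]
    | succ n ih =>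
      intro hn
      have hn' : n ≤ T := Nat.le_of_succ_le hn
      have hmem : n + 1 ∈ Icc 1 T := Finset.mem_Icc.2 ⟨Nat.succ_le_succ (Nat.zero_le n), hn⟩
      set f : Ω → ℝ := fun ω => Real.exp (l * Z n ω) with hfdef
      set g : Ω → ℝ := fun ω => Real.exp (l * ξ (n+1) ω) with hgdef
      have hsplit : ∀ ω, Real.exp (l * Z (n+1) ω) = f ω * g ω := by
        intro ω
        rw [hfdef, hgdef, ← Real.exp_add, ← mul_add]
        congr 2
        exact Finset.sum_Icc_succ_top (Nat.succ_le_succ (Nat.zero_le n)) _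
      have hfg_int : Integrable (f * g) μ := by
        refine (hZexp_int l (n+1) hn).congr ?_
        filter_upwards with ω
        exact (hsplit ω)
      have hg_int : Integrable g μ := by
        refine Integrable.mono' (integrable_const (Real.exp (|l| * (M * a (n+1))))) ?_ ?_
        · exact (Real.continuous_exp.comp (continuous_const.mul continuous_id))
            |>.comp_stronglyMeasurable
              ((hξ_meas (n+1) hmem).mono (ℱ.le (n+1))) |>.aestronglyMeasurable
        · filter_upwards [hξ_bdd (n+1) hmem] with ω hω
          rw [Real.norm_eq_abs, abs_of_pos (Real.exp_pos _), Real.exp_le_exp]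
          calc l * ξ (n+1) ω ≤ |l * ξ (n+1) ω| := le_abs_self _
            _ = |l| * |ξ (n+1) ω| := abs_mul _ _
            _ ≤ |l| * (M * a (n+1)) := mul_le_mul_of_nonneg_left hω (abs_nonneg _)
      have hf_meas : StronglyMeasurable[ℱ n] f :=
        (Real.continuous_exp.comp (continuous_const.mul continuous_id))
          |>.comp_stronglyMeasurable (hZ_meas n hn')
      -- pull-out property
      have hpull : μ[f * g | ℱ n] =ᵐ[μ] f * μ[g | ℱ n] :=
        condExp_stronglyMeasurable_mul_of_bound (ℱ.le n) hf_meas hg_int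
          (Real.exp (|l| * ∑ t ∈ Icc 1 n, M * a t)) (hZexp_bdd l n hn')
      -- conditional Hoeffding bound for g
      have hcondg : μ[g | ℱ n] ≤ᵐ[μ]
          fun _ => Real.exp (l ^ 2 * (M * a (n+1)) ^ 2 / 2) := by
        have h0 : μ[fun ω => ξ (n+1) ω | ℱ n] =ᵐ[μ] 0 := by
          have := hξ_cond (n+1) hmem
          simpa using this
        exact condexp_exp_le μ (ℱ.le n) (hξ_int (n+1) hmem) h0 (hξ_bdd (n+1) hmem) l
      have hce_int : Integrable (f * μ[g | ℱ n]) μ :=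
        (integrable_condExp (f := f * g)).congr hpull
      have step1 : ∫ ω, Real.exp (l * Z (n+1) ω) ∂μ = ∫ ω, (f * g) ω ∂μ := by
        refine integral_congr_ae ?_
        filter_upwards with ω using hsplit ω
      have step2 : ∫ ω, (f * g) ω ∂μ = ∫ ω, (μ[f * g | ℱ n]) ω ∂μ :=
        (integral_condExp (μ := μ) (f := f * g) (ℱ.le n)).symm
      have step3 : ∫ ω, (μ[f * g | ℱ n]) ω ∂μ = ∫ ω, (f * μ[g | ℱ n]) ω ∂μ :=
        integral_congr_ae hpull
      have step4 : ∫ ω, (f * μ[g | ℱ n]) ω ∂μ ≤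
          ∫ ω, f ω * Real.exp (l ^ 2 * (M * a (n+1)) ^ 2 / 2) ∂μ := by
        refine integral_mono_ae hce_int ((hZexp_int l n hn').mul_const _) ?_
        filter_upwards [hcondg] with ω hω
        exact mul_le_mul_of_nonneg_left hω (Real.exp_pos _).le
      have step5 : ∫ ω, f ω * Real.exp (l ^ 2 * (M * a (n+1)) ^ 2 / 2) ∂μ ≤
          Real.exp (l ^ 2 * M ^ 2 * (∑ t ∈ Icc 1 (n+1), a t ^ 2) / 2) := by
        rw [integral_mul_const]
        have h1 : ∫ ω, f ω ∂μ ≤ Real.exp (l ^ 2 * M ^ 2 * (∑ t ∈ Icc 1 n, a t ^ 2) / 2) :=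
          ih hn'
        calc (∫ ω, f ω ∂μ) * Real.exp (l ^ 2 * (M * a (n+1)) ^ 2 / 2)
            ≤ Real.exp (l ^ 2 * M ^ 2 * (∑ t ∈ Icc 1 n, a t ^ 2) / 2) *
              Real.exp (l ^ 2 * (M * a (n+1)) ^ 2 / 2) :=
              mul_le_mul_of_nonneg_right h1 (Real.exp_pos _).le
          _ = Real.exp (l ^ 2 * M ^ 2 * (∑ t ∈ Icc 1 (n+1), a t ^ 2) / 2) := by
              rw [← Real.exp_add]
              congr 1
              rw [Finset.sum_Icc_succ_top (Nat.succ_le_succ (Nat.zero_le n))]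
              ring
      calc ∫ ω, Real.exp (l * Z (n+1) ω) ∂μ
          = ∫ ω, (f * μ[g | ℱ n]) ω ∂μ := by rw [step1, step2, step3]
        _ ≤ _ := step4.trans step5
  -- identify the deviation with Z T a.e.
  have hYeq : ∀ᵐ ω ∂μ, (∑ k ∈ S ω, y k / p k) - ∑ k, y k = Z T ω := by
    filter_upwards [hrep] with ω hω
    have h1 : ∑ k ∈ S ω, y k / p k
        = ∑ k, (y k / p k) * (if k ∈ S ω then (1:ℝ) else 0) := by
      simp only [mul_ite, mul_one, mul_zero]
      rw [Finset.sum_ite_mem, Finset.univ_inter]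
    have h2 : ∑ k, (y k / p k) * (if k ∈ S ω then (1:ℝ) else 0)
        = ∑ k, (y k / p k) * (p k + ∑ t ∈ Icc 1 T, δ t ω k) :=
      Finset.sum_congr rfl fun k _ => by rw [hω k]
    have h3 : ∑ k, (y k / p k) * (p k + ∑ t ∈ Icc 1 T, δ t ω k)
        = (∑ k, y k) + Z T ω := by
      simp only [mul_add, Finset.sum_add_distrib, Finset.mul_sum]
      congr 1
      · exact Finset.sum_congr rfl fun k _ => div_mul_cancel₀ (y k) (hp k).ne'
      · rw [hZdef]
        exact Finset.sum_comm
    rw [h1, h2, h3]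
    ring
  -- rewrite the event using hYeq
  have hev : μ {ω | (N : ℝ) * ε ≤ (∑ k ∈ S ω, y k / p k) - ∑ k, y k}
      = μ {ω | (N : ℝ) * ε ≤ Z T ω} := by
    refine measure_congr ?_
    filter_upwards [hYeq] with ω hω
    have : ((N : ℝ) * ε ≤ ∑ k ∈ S ω, y k / p k - ∑ k, y k) = ((N : ℝ) * ε ≤ Z T ω) := by
      rw [hω]
    exact this
  rw [hev]
  set A : ℝ := ∑ t ∈ Icc 1 T, a t ^ 2 with hAdef
  have hA0 : 0 ≤ A := Finset.sum_nonneg fun t _ => sq_nonneg _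
  rcases eq_or_lt_of_le (mul_nonneg (sq_nonneg M) hA0) with hD | hD
  · -- degenerate case : M ^ 2 * A = 0, the bound is trivial since exp 0 = 1
    have hdenom : 2 * M ^ 2 * A = 0 := by
      rw [mul_assoc, ← hD]; ring
    rw [hdenom, div_zero, Real.exp_zero, ENNReal.ofReal_one]
    exact prob_le_one
  · -- main case : optimize the Chernoff bound at l = Nε / (M² A)
    have hMA : M ^ 2 * A ≠ 0 := ne_of_gt hD
    set l : ℝ := ((N : ℝ) * ε) / (M ^ 2 * A) with hldef
    have hNε : 0 < (N : ℝ) * ε := mul_pos (by exact_mod_cast hN) hε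
    have hl0 : 0 ≤ l := le_of_lt (div_pos hNε hD)
    have hint' : Integrable (fun ω => Real.exp (l * Z T ω)) μ := hZexp_int l T le_rfl
    have hcher := measure_ge_le_exp_mul_mgf (μ := μ) (X := Z T) ((N : ℝ) * ε) hl0 hint'
    have hmgf : mgf (Z T) μ l ≤ Real.exp (l ^ 2 * M ^ 2 * A / 2) := key l T le_rfl
    have hfinal : Real.exp (-l * ((N:ℝ) * ε)) * mgf (Z T) μ l ≤
        Real.exp (-((N : ℝ) ^ 2 * ε ^ 2) / (2 * M ^ 2 * A)) := by
      have h1 : Real.exp (-l * ((N:ℝ) * ε)) * mgf (Z T) μ l ≤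
          Real.exp (-l * ((N:ℝ) * ε)) * Real.exp (l ^ 2 * M ^ 2 * A / 2) :=
        mul_le_mul_of_nonneg_left hmgf (Real.exp_pos _).le
      refine h1.trans (le_of_eq ?_)
      rw [← Real.exp_add]
      have hMne : M ≠ 0 := by
        intro h
        rw [h] at hD
        simp at hD
      have hAne : A ≠ 0 := by
        intro h
        rw [h] at hD
        simp at hD
      congr 1
      rw [hldef]
      field_simp
      ring
    have htR : (μ {ω | (N : ℝ) * ε ≤ Z T ω}).toReal ≤
        Real.exp (-((N : ℝ) ^ 2 * ε ^ 2) / (2 * M ^ 2 * A)) := hcher.trans hfinal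
    rw [← ENNReal.ofReal_toReal (measure_ne_top μ {ω | (N : ℝ) * ε ≤ Z T ω})]
    exact ENNReal.ofReal_le_ofReal htR
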